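/- Let β be an even positive integer. Define G_{β,N} = g_{β,N} ∏_{j=2}^N [Γ(1 + jβ/2)/Γ(1 + β/2)] with g_{β,N} = (2π)^{N/2} β^{−N(1/2 + β(N−1)/4)}, and 𝒩_β = (π^{β/2}/2^{β−1}) ∏_{j=2}^β [Γ(1 + 2j/β)/Γ(1 + 2/β)]. Then as N → ∞, (1/2) [ G_{β,N−1} / (G_{β,N} 𝒩_β) ] (2N)^{βN/2 + β} = β^{−β/2} 2^{−5/2 + 2β + Nβ} π^{−1 − β/2} N^{−1/2 + β} e^{Nβ/2} Γ(1 + β/2) ∏_{j=2}^β [Γ(1 + 2/β)/Γ(1 + 2j/β)] · (1 + O(N^{−1})); that is, the difference between the left-hand side and the displayed main term is bounded in absolute value by C·N^{−1} times the main term, for some constant C and all sufficiently large N. -/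

import Mathlib

open Filter Finset

noncomputable section

/-- The Gaussian β-ensemble normalisation constant
`G_{β,N} = g_{β,N} ∏_{j=2}^N Γ(1+jβ/2)/Γ(1+β/2)`,
`g_{β,N} = (2π)^{N/2} β^{-N(1/2+β(N-1)/4)}`. -/
def Gconst (β : ℕ) (N : ℕ) : ℝ :=
  (2 * Real.pi) ^ ((N : ℝ) / 2) *
    (β : ℝ) ^ (-(N : ℝ) * (1 / 2 + (β : ℝ) * ((N : ℝ) - 1) / 4)) *
    ∏ j ∈ Finset.Icc 2 N,
      Real.Gamma (1 + (j : ℝ) * (β : ℝ) / 2) / Real.Gamma (1 + (β : ℝ) / 2)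

/-- The Selberg-integral normalisation constant
`𝒩_β = (π^{β/2}/2^{β-1}) ∏_{j=2}^β Γ(1+2j/β)/Γ(1+2/β)`. -/
def Nconst (β : ℕ) : ℝ :=
  Real.pi ^ ((β : ℝ) / 2) / 2 ^ ((β : ℝ) - 1) *
    ∏ j ∈ Finset.Icc 2 β,
      Real.Gamma (1 + 2 * (j : ℝ) / (β : ℝ)) / Real.Gamma (1 + 2 / (β : ℝ))

/-- The main term of the asymptotic expansion. -/
def mainTerm (β : ℕ) (N : ℕ) : ℝ :=
  (β : ℝ) ^ (-(β : ℝ) / 2) * (2 : ℝ) ^ (-(5 : ℝ) / 2 + 2 * (β : ℝ) + (N : ℝ) * (β : ℝ)) *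
    Real.pi ^ (-(1 : ℝ) - (β : ℝ) / 2) * (N : ℝ) ^ (-(1 : ℝ) / 2 + (β : ℝ)) *
    Real.exp ((N : ℝ) * (β : ℝ) / 2) * Real.Gamma (1 + (β : ℝ) / 2) *
    ∏ j ∈ Finset.Icc 2 β,
      Real.Gamma (1 + 2 / (β : ℝ)) / Real.Gamma (1 + 2 * (j : ℝ) / (β : ℝ))


open Stirling Real


lemma g_tendsto : Tendsto (fun k => Real.log (stirlingSeq (k+1))) atTop (nhds (Real.log (√π))) := by
  have h1 : Tendsto (fun k : ℕ => stirlingSeq (k+1)) atTop (nhds (√π)) :=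
    tendsto_stirlingSeq_sqrt_pi.comp (tendsto_add_atTop_nat 1)
  exact ((Real.continuousAt_log (by positivity)).tendsto.comp h1)

lemma log_stirling_le (n : ℕ) (hn : 1 ≤ n) :
    Real.log (stirlingSeq (n+1)) - Real.log (√π) ≤ 1 / (4 * n) := by
  have key : ∀ K : ℕ, Real.log (stirlingSeq (n+1)) - Real.log (stirlingSeq (n+K+1)) ≤ 1/(4*n) := by
    intro K
    have tel : ∑ k ∈ range K, (Real.log (stirlingSeq (n+k+1)) - Real.log (stirlingSeq (n+(k+1)+1)))
        = Real.log (stirlingSeq (n+0+1)) - Real.log (stirlingSeq (n+K+1)) :=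
      Finset.sum_range_sub' (fun k => Real.log (stirlingSeq (n+k+1))) K
    have tel2 : ∑ k ∈ range K, ((1:ℝ)/(4*(n+k)) - 1/(4*(n+(k+1))))
        = 1/(4*(n+0:ℝ)) - 1/(4*(n+K:ℝ)) := by
      have := Finset.sum_range_sub' (fun k => (1:ℝ)/(4*(n+k))) K
      push_cast at this ⊢
      convert this using 2 <;> push_cast <;> ring
    have hle : ∑ k ∈ range K, (Real.log (stirlingSeq (n+k+1)) - Real.log (stirlingSeq (n+(k+1)+1)))
        ≤ ∑ k ∈ range K, ((1:ℝ)/(4*(n+k)) - 1/(4*(n+(k+1)))) := by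
      apply Finset.sum_le_sum
      intro k _
      have h := log_stirlingSeq_sub_log_stirlingSeq_succ (n+k+1)
      have h2 : Real.log (stirlingSeq (n+k+1)) - Real.log (stirlingSeq (n+(k+1)+1))
          ≤ 1 / (4 * ((n:ℝ)+k+1) ^ 2) := by
        convert h using 3 <;> push_cast <;> ring
      refine h2.trans ?_
      have hnk : (0:ℝ) < (n:ℝ)+k := by
        have : (1:ℝ) ≤ (n:ℝ) := by exact_mod_cast hn
        positivity
      rw [div_sub_div _ _ (by positivity) (by positivity), div_le_div_iff₀ (by positivity) (by positivity)]
      push_cast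
      ring_nf
      nlinarith [sq_nonneg ((n:ℝ)+k)]
    rw [tel] at hle
    rw [tel2] at hle
    simp only [Nat.cast_ofNat, add_zero, Nat.cast_add] at hle ⊢
    have : (0:ℝ) ≤ 1/(4*((n:ℝ)+K)) := by positivity
    push_cast at hle
    linarith
  have hlim : Tendsto (fun K => Real.log (stirlingSeq (n+K+1))) atTop (nhds (Real.log (√π))) := by
    have := g_tendsto.comp (tendsto_add_atTop_nat n)
    convert this using 2 with K
    simp [Function.comp, Nat.add_comm]
  have : Real.log (stirlingSeq (n+1)) - 1/(4*(n:ℝ)) ≤ Real.log (√π) :=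
    ge_of_tendsto' hlim (fun K => by linarith [key K])
  linarith

lemma stirling_ratio_bound (m : ℕ) (hm : 2 ≤ m) :
    |Real.sqrt Real.pi / stirlingSeq m - 1| ≤ ((m:ℝ))⁻¹ := by
  obtain ⟨n, rfl⟩ : ∃ n, m = n + 1 := ⟨m-1, by omega⟩
  have hn : 1 ≤ n := by omega
  have hpos : 0 < stirlingSeq (n+1) := stirlingSeq'_pos n
  have hsp : (0:ℝ) < √π := by positivity
  have hlow : Real.log (√π) ≤ Real.log (stirlingSeq (n+1)) :=
    log_stirlingSeq'_antitone.le_of_tendsto g_tendsto n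
  have hup := log_stirling_le n hn
  set S := √π / stirlingSeq (n+1) with hS
  have hSpos : 0 < S := by positivity
  have hlogS : Real.log S = Real.log (√π) - Real.log (stirlingSeq (n+1)) :=
    Real.log_div (by positivity) (ne_of_gt hpos)
  have hS1 : S ≤ 1 := by
    have : Real.log S ≤ 0 := by rw [hlogS]; linarith
    calc S = Real.exp (Real.log S) := (Real.exp_log hSpos).symm
    _ ≤ Real.exp 0 := Real.exp_le_exp.mpr this
    _ = 1 := Real.exp_zero
  have hS2 : 1 - 1/(4*n) ≤ S := by
    have h1 : -(1/(4*(n:ℝ))) ≤ Real.log S := by rw [hlogS]; linarith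
    have := Real.add_one_le_exp (Real.log S)
    rw [Real.exp_log hSpos] at this
    linarith
  rw [abs_sub_le_iff]
  constructor
  · have : (0:ℝ) ≤ ((n:ℝ)+1)⁻¹ := by positivity
    push_cast; linarith
  · have hn1 : (1:ℝ) ≤ (n:ℝ) := by exact_mod_cast hn
    have h4 : 1/(4*(n:ℝ)) ≤ ((n:ℝ)+1)⁻¹ := by
      rw [div_le_iff₀ (by positivity), inv_mul_eq_div, le_div_iff₀ (by positivity)]
      nlinarith
    push_cast
    linarith


example (j b : ℕ) : (0:ℝ) < Real.Gamma (1 + (j:ℝ)*(b:ℝ)/2) := by positivity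

lemma log_Gconst (β N : ℕ) (hβ : 0 < β) (hN : 1 ≤ N) :
    Real.log (Gconst β N) = ((N:ℝ)/2) * Real.log (2*Real.pi)
      + (-(N : ℝ) * (1 / 2 + (β : ℝ) * ((N : ℝ) - 1) / 4)) * Real.log (β:ℝ)
      + (∑ j ∈ Finset.Icc 2 N, Real.log (Real.Gamma (1 + (j : ℝ) * (β : ℝ) / 2)))
      - ((N:ℝ)-1) * Real.log (Real.Gamma (1 + (β : ℝ) / 2)) := by
  have hβ' : (0:ℝ) < (β:ℝ) := by exact_mod_cast hβ
  have hfac : ∀ j ∈ Finset.Icc 2 N,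
      Real.Gamma (1 + (j : ℝ) * (β : ℝ) / 2) / Real.Gamma (1 + (β : ℝ) / 2) ≠ 0 := by
    intro j _
    have h1 : (0:ℝ) < Real.Gamma (1 + (j:ℝ)*(β:ℝ)/2) := by positivity
    have h2 : (0:ℝ) < Real.Gamma (1 + (β:ℝ)/2) := by positivity
    positivity
  have hPpos : (0:ℝ) < ∏ j ∈ Finset.Icc 2 N,
      Real.Gamma (1 + (j : ℝ) * (β : ℝ) / 2) / Real.Gamma (1 + (β : ℝ) / 2) := by
    apply Finset.prod_pos
    intro j hj
    have h1 : (0:ℝ) < Real.Gamma (1 + (j:ℝ)*(β:ℝ)/2) := by positivity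
    have h2 : (0:ℝ) < Real.Gamma (1 + (β:ℝ)/2) := by positivity
    positivity
  rw [Gconst, Real.log_mul (by positivity) hPpos.ne', Real.log_mul (by positivity) (by positivity),
    Real.log_rpow (by positivity), Real.log_rpow hβ', Real.log_prod hfac]
  have : ∀ j ∈ Finset.Icc 2 N,
      Real.log (Real.Gamma (1 + (j : ℝ) * (β : ℝ) / 2) / Real.Gamma (1 + (β : ℝ) / 2))
      = Real.log (Real.Gamma (1 + (j : ℝ) * (β : ℝ) / 2)) - Real.log (Real.Gamma (1 + (β : ℝ) / 2)) := by
    intro j _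
    have h1 : (0:ℝ) < Real.Gamma (1 + (j:ℝ)*(β:ℝ)/2) := by positivity
    have h2 : (0:ℝ) < Real.Gamma (1 + (β:ℝ)/2) := by positivity
    exact Real.log_div h1.ne' h2.ne'
  rw [Finset.sum_congr rfl this, Finset.sum_sub_distrib, Finset.sum_const, Nat.card_Icc,
    nsmul_eq_mul]
  have : ((N + 1 - 2 : ℕ) : ℝ) = (N:ℝ) - 1 := by
    have : N + 1 - 2 = N - 1 := by omega
    rw [this, Nat.cast_sub hN]; norm_num
  rw [this]; ring


lemma log_Nconst (β : ℕ) (hβ : 0 < β) :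
    Real.log (Nconst β) = ((β:ℝ)/2) * Real.log Real.pi - ((β:ℝ)-1) * Real.log 2
      + (∑ j ∈ Finset.Icc 2 β, Real.log (Real.Gamma (1 + 2 * (j : ℝ) / (β : ℝ))))
      - ((β:ℝ)-1) * Real.log (Real.Gamma (1 + 2 / (β : ℝ))) := by
  have hβ' : (0:ℝ) < (β:ℝ) := by exact_mod_cast hβ
  have hfac : ∀ j ∈ Finset.Icc 2 β,
      Real.Gamma (1 + 2 * (j : ℝ) / (β:ℝ)) / Real.Gamma (1 + 2 / (β : ℝ)) ≠ 0 := by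
    intro j _
    have h1 : (0:ℝ) < Real.Gamma (1 + 2*(j:ℝ)/(β:ℝ)) := by positivity
    have h2 : (0:ℝ) < Real.Gamma (1 + 2/(β:ℝ)) := by positivity
    positivity
  have hPpos : (0:ℝ) < ∏ j ∈ Finset.Icc 2 β,
      Real.Gamma (1 + 2 * (j : ℝ) / (β:ℝ)) / Real.Gamma (1 + 2 / (β : ℝ)) := by
    apply Finset.prod_pos
    intro j hj
    have h1 : (0:ℝ) < Real.Gamma (1 + 2*(j:ℝ)/(β:ℝ)) := by positivity
    have h2 : (0:ℝ) < Real.Gamma (1 + 2/(β:ℝ)) := by positivity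
    positivity
  rw [Nconst, Real.log_mul (by positivity) hPpos.ne', Real.log_div (by positivity) (by positivity),
    Real.log_rpow Real.pi_pos, Real.log_rpow (by norm_num), Real.log_prod hfac]
  have : ∀ j ∈ Finset.Icc 2 β,
      Real.log (Real.Gamma (1 + 2 * (j : ℝ) / (β:ℝ)) / Real.Gamma (1 + 2 / (β : ℝ)))
      = Real.log (Real.Gamma (1 + 2 * (j : ℝ) / (β:ℝ))) - Real.log (Real.Gamma (1 + 2 / (β : ℝ))) := by
    intro j _
    have h1 : (0:ℝ) < Real.Gamma (1 + 2*(j:ℝ)/(β:ℝ)) := by positivity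
    have h2 : (0:ℝ) < Real.Gamma (1 + 2/(β:ℝ)) := by positivity
    exact Real.log_div h1.ne' h2.ne'
  rw [Finset.sum_congr rfl this, Finset.sum_sub_distrib, Finset.sum_const, Nat.card_Icc,
    nsmul_eq_mul]
  have : ((β + 1 - 2 : ℕ) : ℝ) = (β:ℝ) - 1 := by
    have h : β + 1 - 2 = β - 1 := by omega
    rw [h, Nat.cast_sub hβ]; norm_num
  rw [this]; ring

lemma log_mainTerm (β N : ℕ) (hβ : 0 < β) (hN : 0 < N) :
    Real.log (mainTerm β N) = (-(β:ℝ)/2) * Real.log (β:ℝ)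
      + (-(5:ℝ)/2 + 2*(β:ℝ) + (N:ℝ)*(β:ℝ)) * Real.log 2
      + (-(1:ℝ) - (β:ℝ)/2) * Real.log Real.pi
      + (-(1:ℝ)/2 + (β:ℝ)) * Real.log (N:ℝ)
      + (N:ℝ)*(β:ℝ)/2 + Real.log (Real.Gamma (1 + (β : ℝ) / 2))
      + (((β:ℝ)-1) * Real.log (Real.Gamma (1 + 2 / (β : ℝ)))
         - ∑ j ∈ Finset.Icc 2 β, Real.log (Real.Gamma (1 + 2 * (j : ℝ) / (β : ℝ)))) := by
  have hβ' : (0:ℝ) < (β:ℝ) := by exact_mod_cast hβ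
  have hN' : (0:ℝ) < (N:ℝ) := by exact_mod_cast hN
  have hΓ : (0:ℝ) < Real.Gamma (1 + (β:ℝ)/2) := by positivity
  have hfac : ∀ j ∈ Finset.Icc 2 β,
      Real.Gamma (1 + 2 / (β : ℝ)) / Real.Gamma (1 + 2 * (j : ℝ) / (β:ℝ)) ≠ 0 := by
    intro j _
    have h1 : (0:ℝ) < Real.Gamma (1 + 2*(j:ℝ)/(β:ℝ)) := by positivity
    have h2 : (0:ℝ) < Real.Gamma (1 + 2/(β:ℝ)) := by positivity
    positivity
  have hPpos : (0:ℝ) < ∏ j ∈ Finset.Icc 2 β,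
      Real.Gamma (1 + 2 / (β : ℝ)) / Real.Gamma (1 + 2 * (j : ℝ) / (β:ℝ)) := by
    apply Finset.prod_pos
    intro j hj
    have h1 : (0:ℝ) < Real.Gamma (1 + 2*(j:ℝ)/(β:ℝ)) := by positivity
    have h2 : (0:ℝ) < Real.Gamma (1 + 2/(β:ℝ)) := by positivity
    positivity
  rw [mainTerm, Real.log_mul (by positivity) hPpos.ne',
    Real.log_mul (by positivity) hΓ.ne',
    Real.log_mul (by positivity) (Real.exp_pos _).ne',
    Real.log_mul (by positivity) (by positivity),
    Real.log_mul (by positivity) (by positivity),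
    Real.log_mul (by positivity) (by positivity),
    Real.log_rpow hβ', Real.log_rpow (by norm_num), Real.log_rpow Real.pi_pos,
    Real.log_rpow hN', Real.log_exp, Real.log_prod hfac]
  have : ∀ j ∈ Finset.Icc 2 β,
      Real.log (Real.Gamma (1 + 2 / (β : ℝ)) / Real.Gamma (1 + 2 * (j : ℝ) / (β:ℝ)))
      = Real.log (Real.Gamma (1 + 2 / (β : ℝ))) - Real.log (Real.Gamma (1 + 2 * (j : ℝ) / (β:ℝ))) := by
    intro j _
    have h1 : (0:ℝ) < Real.Gamma (1 + 2*(j:ℝ)/(β:ℝ)) := by positivity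
    have h2 : (0:ℝ) < Real.Gamma (1 + 2/(β:ℝ)) := by positivity
    exact Real.log_div h2.ne' h1.ne'
  rw [Finset.sum_congr rfl this, Finset.sum_sub_distrib, Finset.sum_const, Nat.card_Icc,
    nsmul_eq_mul]
  have : ((β + 1 - 2 : ℕ) : ℝ) = (β:ℝ) - 1 := by
    have h : β + 1 - 2 = β - 1 := by omega
    rw [h, Nat.cast_sub hβ]; norm_num
  rw [this]

lemma Gconst_pos (β N : ℕ) (hβ : 0 < β) : 0 < Gconst β N := by
  have hβ' : (0:ℝ) < (β:ℝ) := by exact_mod_cast hβ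
  have hP : (0:ℝ) < ∏ j ∈ Finset.Icc 2 N,
      Real.Gamma (1 + (j : ℝ) * (β : ℝ) / 2) / Real.Gamma (1 + (β : ℝ) / 2) := by
    apply Finset.prod_pos
    intro j hj
    have h1 : (0:ℝ) < Real.Gamma (1 + (j:ℝ)*(β:ℝ)/2) := by positivity
    have h2 : (0:ℝ) < Real.Gamma (1 + (β:ℝ)/2) := by positivity
    positivity
  rw [Gconst]; positivity

lemma Nconst_pos (β : ℕ) (hβ : 0 < β) : 0 < Nconst β := by
  have hβ' : (0:ℝ) < (β:ℝ) := by exact_mod_cast hβ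
  have hP : (0:ℝ) < ∏ j ∈ Finset.Icc 2 β,
      Real.Gamma (1 + 2 * (j : ℝ) / (β:ℝ)) / Real.Gamma (1 + 2 / (β : ℝ)) := by
    apply Finset.prod_pos
    intro j hj
    have h1 : (0:ℝ) < Real.Gamma (1 + 2*(j:ℝ)/(β:ℝ)) := by positivity
    have h2 : (0:ℝ) < Real.Gamma (1 + 2/(β:ℝ)) := by positivity
    positivity
  rw [Nconst]; positivity

lemma mainTerm_pos (β N : ℕ) (hβ : 0 < β) (hN : 0 < N) : 0 < mainTerm β N := by
  have hβ' : (0:ℝ) < (β:ℝ) := by exact_mod_cast hβ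
  have hN' : (0:ℝ) < (N:ℝ) := by exact_mod_cast hN
  have hΓ : (0:ℝ) < Real.Gamma (1 + (β:ℝ)/2) := by positivity
  have hP : (0:ℝ) < ∏ j ∈ Finset.Icc 2 β,
      Real.Gamma (1 + 2 / (β : ℝ)) / Real.Gamma (1 + 2 * (j : ℝ) / (β:ℝ)) := by
    apply Finset.prod_pos
    intro j hj
    have h1 : (0:ℝ) < Real.Gamma (1 + 2*(j:ℝ)/(β:ℝ)) := by positivity
    have h2 : (0:ℝ) < Real.Gamma (1 + 2/(β:ℝ)) := by positivity
    positivity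
  rw [mainTerm]; positivity

lemma key_identity (β b N : ℕ) (hβ : β = 2*b) (hb : 1 ≤ b) (hN : 2 ≤ N) :
    1 / 2 * (Gconst β (N - 1) / (Gconst β N * Nconst β)) *
        (2 * (N : ℝ)) ^ ((β : ℝ) * (N : ℝ) / 2 + (β : ℝ))
      = mainTerm β N * (Real.sqrt Real.pi / stirlingSeq (N * b)) := by
  subst hβ
  have hβpos : 0 < 2*b := by omega
  have hb' : (0:ℝ) < (b:ℝ) := by exact_mod_cast hb
  have hN' : (0:ℝ) < (N:ℝ) := by exact_mod_cast (by omega : 0 < N)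
  have hNR : (1:ℝ) < (N:ℝ) := by exact_mod_cast hN
  have hstir : 0 < stirlingSeq (N * b) := by
    have := stirlingSeq'_pos (N*b - 1)
    rwa [Nat.sub_add_cancel (Nat.mul_pos (by omega) hb)] at this
  have hGm : 0 < Gconst (2*b) (N-1) := Gconst_pos _ _ hβpos
  have hGN : 0 < Gconst (2*b) N := Gconst_pos _ _ hβpos
  have hNc : 0 < Nconst (2*b) := Nconst_pos _ hβpos
  have hMT : 0 < mainTerm (2*b) N := mainTerm_pos _ _ hβpos (by omega)
  have hsp : (0:ℝ) < Real.sqrt Real.pi := Real.sqrt_pos.mpr Real.pi_pos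
  have hL : (0:ℝ) < 1 / 2 * (Gconst (2*b) (N - 1) / (Gconst (2*b) N * Nconst (2*b))) *
      (2 * (N : ℝ)) ^ (((2*b:ℕ) : ℝ) * (N : ℝ) / 2 + ((2*b:ℕ) : ℝ)) := by positivity
  have hR : (0:ℝ) < mainTerm (2*b) N * (Real.sqrt Real.pi / stirlingSeq (N * b)) := by positivity
  rw [← Real.exp_log hL, ← Real.exp_log hR]
  congr 1
  have hsplit : (∑ j ∈ Finset.Icc 2 N, Real.log (Real.Gamma (1 + (j : ℝ) * ((2*b:ℕ) : ℝ) / 2)))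
      = (∑ j ∈ Finset.Icc 2 (N-1), Real.log (Real.Gamma (1 + (j : ℝ) * ((2*b:ℕ) : ℝ) / 2)))
        + Real.log (Real.Gamma (1 + (N : ℝ) * ((2*b:ℕ) : ℝ) / 2)) := by
    have h2 : 2 ≤ (N-1) + 1 := by omega
    have := Finset.sum_Icc_succ_top h2
      (fun j : ℕ => Real.log (Real.Gamma (1 + (j : ℝ) * ((2*b:ℕ) : ℝ) / 2)))
    rw [show N - 1 + 1 = N by omega] at this
    rw [this]
  have hΓm : Real.Gamma (1 + (N : ℝ) * ((2*b:ℕ) : ℝ) / 2) = ((N*b).factorial : ℝ) := by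
    rw [show (1 + (N : ℝ) * ((2*b:ℕ) : ℝ) / 2) = ((N*b : ℕ) : ℝ) + 1 by push_cast; ring]
    exact Real.Gamma_nat_eq_factorial (N*b)
  rw [Real.log_mul (by positivity) (by positivity),
      Real.log_mul (by norm_num) (by positivity),
      Real.log_div hGm.ne' (by positivity),
      Real.log_mul hGN.ne' hNc.ne',
      Real.log_rpow (by positivity),
      Real.log_mul hMT.ne' (by positivity),
      Real.log_div hsp.ne' hstir.ne',
      log_Gconst (2*b) (N-1) hβpos (by omega),
      log_Gconst (2*b) N hβpos (by omega),
      log_Nconst (2*b) hβpos,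
      log_mainTerm (2*b) N hβpos (by omega),
      Stirling.log_stirlingSeq_formula,
      hsplit, hΓm,
      Real.log_sqrt Real.pi_pos.le,
      show ((N-1:ℕ):ℝ) = (N:ℝ)-1 by rw [Nat.cast_sub (by omega)]; norm_num,
      one_div, Real.log_inv,
      Real.log_mul (two_ne_zero) Real.pi_ne_zero,
      Real.log_mul (two_ne_zero) hN'.ne',
      show Real.log ((2*b:ℕ) : ℝ) = Real.log 2 + Real.log (b:ℝ) by
        push_cast; rw [Real.log_mul two_ne_zero hb'.ne'],
      show Real.log (2 * ((N*b:ℕ) : ℝ)) = Real.log 2 + (Real.log (N:ℝ) + Real.log (b:ℝ)) by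
        push_cast; rw [Real.log_mul two_ne_zero (by positivity), Real.log_mul hN'.ne' hb'.ne'],
      show Real.log (((N*b:ℕ) : ℝ) / Real.exp 1)
          = Real.log (N:ℝ) + Real.log (b:ℝ) - 1 by
        push_cast
        rw [Real.log_div (by positivity) (Real.exp_pos 1).ne', Real.log_exp,
          Real.log_mul hN'.ne' hb'.ne'],
      show ((N*b:ℕ) : ℝ) = (N:ℝ) * (b:ℝ) by push_cast; ring]
  push_cast
  ring

/-- Asymptotics of the Gaussian β-ensemble normalisation prefactor: as `N → ∞`,
`(1/2) G_{β,N-1} / (G_{β,N} 𝒩_β) (2N)^{βN/2+β}` equals the main term up to a relative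
error `O(N^{-1})`. -/
theorem gaussian_prefactor_asymptotics (β : ℕ) (hβpos : 0 < β) (hβeven : Even β) :
    ∃ C > 0, ∃ N₀ : ℕ, ∀ N : ℕ, N₀ ≤ N →
      |1 / 2 * (Gconst β (N - 1) / (Gconst β N * Nconst β)) *
            (2 * (N : ℝ)) ^ ((β : ℝ) * (N : ℝ) / 2 + (β : ℝ)) -
          mainTerm β N| ≤
        C * (N : ℝ)⁻¹ * mainTerm β N := by
  obtain ⟨b, hbb⟩ := hβeven
  have hβ : β = 2 * b := by omega
  have hb1 : 1 ≤ b := by omega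
  refine ⟨1, one_pos, 2, fun N hN => ?_⟩
  have hN0 : 0 < N := by omega
  have hN' : (0:ℝ) < (N:ℝ) := by exact_mod_cast hN0
  have hMT : 0 < mainTerm β N := mainTerm_pos β N hβpos hN0
  have hmN : N ≤ N * b := Nat.le_mul_of_pos_right N hb1
  have hm2 : 2 ≤ N * b := le_trans hN hmN
  have hrat := stirling_ratio_bound (N*b) hm2
  rw [key_identity β b N hβ hb1 hN]
  have step1 : |mainTerm β N * (Real.sqrt Real.pi / stirlingSeq (N*b)) - mainTerm β N|
      = mainTerm β N * |Real.sqrt Real.pi / stirlingSeq (N*b) - 1| := by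
    rw [show mainTerm β N * (Real.sqrt Real.pi / stirlingSeq (N*b)) - mainTerm β N
        = mainTerm β N * (Real.sqrt Real.pi / stirlingSeq (N*b) - 1) by ring,
      abs_mul, abs_of_pos hMT]
  rw [step1]
  have hinv : (((N*b : ℕ)):ℝ)⁻¹ ≤ ((N:ℝ))⁻¹ := by
    apply inv_anti₀ hN'
    exact_mod_cast hmN
  calc mainTerm β N * |Real.sqrt Real.pi / stirlingSeq (N*b) - 1|
      ≤ mainTerm β N * (((N*b : ℕ)):ℝ)⁻¹ := by
        exact mul_le_mul_of_nonneg_left hrat hMT.le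
    _ ≤ mainTerm β N * ((N:ℝ))⁻¹ := mul_le_mul_of_nonneg_left hinv hMT.le
    _ = 1 * (N:ℝ)⁻¹ * mainTerm β N := by ring
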